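/- Backward Laplace-domain recursion (Corollary 1, backward part): Fix B ∈ ℕ^d and let Q : ℕ^d → (ℝ → ℝ) be a family of functions with Q_x identically 0 whenever x ≤ B fails, such that for each x ≤ B, Q_x is differentiable on [0,∞), satisfies 0 ≤ Q_x(t) ≤ 1 for all t ≥ 0, has initial value Q_x(0) = 1 if x = B and Q_x(0) = 0 otherwise, and solves the Chapman–Kolmogorov backward system d/dt Q_x(t) = Σ_{k=1}^d λ(x, k)·Q_{x + e_k}(t) − S(x)·Q_x(t) for all t ≥ 0. Then for every s > 0, the improper integral g_x(s) = ∫₀^∞ e^{−st} Q_x(t) dt converges for every x ≤ B and satisfies (s + S(x))·g_x(s) = [x = B] + Σ_{k=1}^d λ(x, k)·g_{x + e_k}(s), where g_{x + e_k}(s) = 0 whenever x + e_k ≤ B fails; equivalently, g_B(s) = 1/(s + S(B)) and, for x ≤ B with x ≠ B, g_x(s) = Σ_{k=1}^d (λ(x, k)/(s + S(x)))·g_{x + e_k}(s). -/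

import Mathlib

open MeasureTheory

/-- Backward Laplace-domain recursion (Corollary 1, backward part): the Laplace
transforms `g_x(s) = ∫₀^∞ e^{−st} Q_x(t) dt` of a bounded solution (supported on
`x ≤ B`) of the Chapman–Kolmogorov backward equations with initial condition
`Q_x(0) = [x = B]` exist for every `s > 0` and satisfy
`(s + S(x))·g_x(s) = [x = B] + ∑_k λ(x,k)·g_{x+eₖ}(s)`. -/
theorem backward_laplace_recursion
    (d : ℕ) (hd : 1 ≤ d)
    (lam : (Fin d → ℕ) → Fin d → ℝ)
    (hlam : ∀ x k, 0 ≤ lam x k)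
    (B : Fin d → ℕ)
    (Q : (Fin d → ℕ) → ℝ → ℝ)
    (hQzero : ∀ x : Fin d → ℕ, ¬ x ≤ B → ∀ t : ℝ, Q x t = 0)
    (hbound : ∀ x : Fin d → ℕ, x ≤ B → ∀ t : ℝ, 0 ≤ t → 0 ≤ Q x t ∧ Q x t ≤ 1)
    (hinit : ∀ x : Fin d → ℕ, x ≤ B → Q x 0 = if x = B then 1 else 0)
    (hderiv : ∀ x : Fin d → ℕ, x ≤ B → ∀ t : ℝ, 0 ≤ t →
      HasDerivWithinAt (Q x)
        ((∑ k, lam x k * Q (x + Pi.single k 1) t) - (∑ k, lam x k) * Q x t)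
        (Set.Ici 0) t)
    (s : ℝ) (hs : 0 < s) :
    ∀ x : Fin d → ℕ, x ≤ B →
      IntegrableOn (fun t => Real.exp (-s * t) * Q x t) (Set.Ioi 0) ∧
      (s + ∑ k, lam x k) * (∫ t in Set.Ioi (0 : ℝ), Real.exp (-s * t) * Q x t) =
        (if x = B then 1 else 0) +
          ∑ k, lam x k *
            ∫ t in Set.Ioi (0 : ℝ), Real.exp (-s * t) * Q (x + Pi.single k 1) t ∧
      (x = B →
        (∫ t in Set.Ioi (0 : ℝ), Real.exp (-s * t) * Q x t) =
          1 / (s + ∑ k, lam B k)) ∧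
      (x ≠ B →
        (∫ t in Set.Ioi (0 : ℝ), Real.exp (-s * t) * Q x t) =
          ∑ k, (lam x k / (s + ∑ j, lam x j)) *
            ∫ t in Set.Ioi (0 : ℝ), Real.exp (-s * t) * Q (x + Pi.single k 1) t) := by
  -- uniform bound for all Q
  have hb : ∀ y : Fin d → ℕ, ∀ t : ℝ, 0 ≤ t → |Q y t| ≤ 1 := by
    intro y t ht
    by_cases hy : y ≤ B
    · rcases hbound y hy t ht with ⟨h1, h2⟩
      rw [abs_le]; constructor <;> linarith
    · rw [hQzero y hy t]; simp
  -- continuity of all Q on [0,∞)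
  have hcont : ∀ y : Fin d → ℕ, ContinuousOn (Q y) (Set.Ici 0) := by
    intro y
    by_cases hy : y ≤ B
    · exact fun t ht => (hderiv y hy t ht).continuousWithinAt
    · have : Set.EqOn (Q y) (fun _ => (0 : ℝ)) (Set.Ici 0) :=
        fun u _ => hQzero y hy u
      exact continuousOn_const.congr this
  -- integrability of all Laplace integrands
  have hint : ∀ y : Fin d → ℕ,
      IntegrableOn (fun t => Real.exp (-s * t) * Q y t) (Set.Ioi 0) := by
    intro y
    apply Integrable.mono' (exp_neg_integrableOn_Ioi 0 hs)
    · apply ContinuousOn.aestronglyMeasurable _ measurableSet_Ioi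
      apply ContinuousOn.mul
      · exact (Real.continuous_exp.comp (continuous_const.mul continuous_id)).continuousOn
      · exact (hcont y).mono Set.Ioi_subset_Ici_self
    · filter_upwards [ae_restrict_mem measurableSet_Ioi] with t ht
      rw [Real.norm_eq_abs, abs_mul, Real.abs_exp]
      calc Real.exp (-s * t) * |Q y t| ≤ Real.exp (-s * t) * 1 := by
            apply mul_le_mul_of_nonneg_left (hb y t (le_of_lt ht)) (Real.exp_pos _).le
        _ = Real.exp (-s * t) := mul_one _
  intro x hx
  refine ⟨hint x, ?_⟩
  -- the key Laplace identity
  have hpos : 0 < s + ∑ k, lam x k := by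
    have : 0 ≤ ∑ k, lam x k := Finset.sum_nonneg fun k _ => hlam x k
    linarith
  set G : ℝ → ℝ := fun t => Real.exp (-s * t) * Q x t with hG
  set G' : ℝ → ℝ := fun t =>
    (∑ k, lam x k * (Real.exp (-s * t) * Q (x + Pi.single k 1) t)) -
      (s + ∑ k, lam x k) * (Real.exp (-s * t) * Q x t) with hG'
  have hG'int : IntegrableOn G' (Set.Ioi 0) := by
    apply Integrable.sub
    · exact integrable_finset_sum _ fun k _ => (hint (x + Pi.single k 1)).const_mul _
    · exact (hint x).const_mul _
  have hGderiv : ∀ t ∈ Set.Ioi (0 : ℝ), HasDerivAt G (G' t) t := by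
    intro t ht
    have hq : HasDerivAt (Q x)
        ((∑ k, lam x k * Q (x + Pi.single k 1) t) - (∑ k, lam x k) * Q x t) t := by
      apply (hderiv x hx t (le_of_lt ht)).hasDerivAt
      exact Ici_mem_nhds ht
    have he : HasDerivAt (fun u => Real.exp (-s * u)) (-s * Real.exp (-s * t)) t := by
      have h1 : HasDerivAt (fun u : ℝ => -s * u) (-s) t := by
        simpa using (hasDerivAt_id t).const_mul (-s)
      simpa [mul_comm] using h1.exp
    have := he.mul hq
    refine this.congr_deriv ?_
    symm
    show G' t = _
    have hms : Real.exp (-s * t) * (∑ k, lam x k * Q (x + Pi.single k 1) t) =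
        ∑ k, lam x k * (Real.exp (-s * t) * Q (x + Pi.single k 1) t) := by
      rw [Finset.mul_sum]
      exact Finset.sum_congr rfl fun k _ => by ring
    rw [mul_sub, hms]
    ring
  have hGlim : Filter.Tendsto G Filter.atTop (nhds 0) := by
    apply squeeze_zero_norm' (a := fun t => Real.exp (-s * t))
    · filter_upwards [Filter.eventually_ge_atTop (0 : ℝ)] with t ht
      rw [Real.norm_eq_abs, abs_mul, Real.abs_exp]
      calc Real.exp (-s * t) * |Q x t| ≤ Real.exp (-s * t) * 1 :=
            mul_le_mul_of_nonneg_left (hb x t ht) (Real.exp_pos _).le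
        _ = Real.exp (-s * t) := mul_one _
    · have h1 : Filter.Tendsto (fun t : ℝ => -s * t) Filter.atTop Filter.atBot :=
        (Filter.tendsto_const_mul_atBot_of_neg (by linarith)).mpr Filter.tendsto_id
      exact Real.tendsto_exp_atBot.comp h1
  have hGcont : ContinuousWithinAt G (Set.Ici 0) 0 := by
    apply ContinuousWithinAt.mul
    · exact (Real.continuous_exp.comp (continuous_const.mul continuous_id)).continuousWithinAt
    · exact hcont x 0 Set.self_mem_Ici
  have hFTC : ∫ t in Set.Ioi (0 : ℝ), G' t = 0 - G 0 :=
    integral_Ioi_of_hasDerivAt_of_tendsto hGcont hGderiv hG'int hGlim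
  have hG0 : G 0 = if x = B then 1 else 0 := by
    simp [hG, hinit x hx]
  -- split the integral of G'
  have hsplit : ∫ t in Set.Ioi (0 : ℝ), G' t =
      (∑ k, lam x k * ∫ t in Set.Ioi (0 : ℝ),
          Real.exp (-s * t) * Q (x + Pi.single k 1) t) -
        (s + ∑ k, lam x k) * ∫ t in Set.Ioi (0 : ℝ), Real.exp (-s * t) * Q x t := by
    have e1 : ∫ t in Set.Ioi (0 : ℝ), G' t =
        (∫ t in Set.Ioi (0 : ℝ), ∑ k, lam x k *
            (Real.exp (-s * t) * Q (x + Pi.single k 1) t)) -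
          ∫ t in Set.Ioi (0 : ℝ),
            (s + ∑ k, lam x k) * (Real.exp (-s * t) * Q x t) :=
      integral_sub
        (integrable_finset_sum _ fun k _ => (hint (x + Pi.single k 1)).const_mul (lam x k))
        ((hint x).const_mul _)
    have e2 : ∫ t in Set.Ioi (0 : ℝ), ∑ k, lam x k *
          (Real.exp (-s * t) * Q (x + Pi.single k 1) t) =
        ∑ k, ∫ t in Set.Ioi (0 : ℝ),
          lam x k * (Real.exp (-s * t) * Q (x + Pi.single k 1) t) :=
      integral_finset_sum _ fun k _ => (hint (x + Pi.single k 1)).const_mul (lam x k)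
    have e3 : ∀ k : Fin d, ∫ t in Set.Ioi (0 : ℝ),
          lam x k * (Real.exp (-s * t) * Q (x + Pi.single k 1) t) =
        lam x k * ∫ t in Set.Ioi (0 : ℝ),
          Real.exp (-s * t) * Q (x + Pi.single k 1) t :=
      fun k => integral_const_mul _ _
    have e4 : ∫ t in Set.Ioi (0 : ℝ),
          (s + ∑ k, lam x k) * (Real.exp (-s * t) * Q x t) =
        (s + ∑ k, lam x k) * ∫ t in Set.Ioi (0 : ℝ), Real.exp (-s * t) * Q x t :=
      integral_const_mul _ _
    rw [e1, e2, e4]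
    congr 1
    exact Finset.sum_congr rfl fun k _ => e3 k
  have key : (s + ∑ k, lam x k) *
      (∫ t in Set.Ioi (0 : ℝ), Real.exp (-s * t) * Q x t) =
      (if x = B then 1 else 0) +
        ∑ k, lam x k *
          ∫ t in Set.Ioi (0 : ℝ), Real.exp (-s * t) * Q (x + Pi.single k 1) t := by
    have := hFTC
    rw [hsplit, hG0] at this
    linarith [this]
  refine ⟨key, ?_, ?_⟩
  · -- x = B
    intro hxB
    subst hxB
    show (∫ t in Set.Ioi (0 : ℝ), Real.exp (-s * t) * Q x t) =
      1 / (s + ∑ k, lam x k)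
    have hzero : ∀ k : Fin d,
        (∫ t in Set.Ioi (0 : ℝ), Real.exp (-s * t) * Q (x + Pi.single k 1) t) = 0 := by
      intro k
      have hnot : ¬ (x + Pi.single k 1 ≤ x) := by
        intro h
        have h2 := h k
        simp only [Pi.add_apply, Pi.single_eq_same] at h2
        omega
      simp only [hQzero _ hnot, mul_zero, integral_zero]
    rw [if_pos rfl] at key
    simp only [hzero, mul_zero, Finset.sum_const_zero, add_zero] at key
    rw [eq_div_iff (ne_of_gt hpos)]
    linarith [key]
  · -- x ≠ B
    intro hxB
    show (∫ t in Set.Ioi (0 : ℝ), Real.exp (-s * t) * Q x t) =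
      ∑ k, (lam x k / (s + ∑ j, lam x j)) *
        ∫ t in Set.Ioi (0 : ℝ), Real.exp (-s * t) * Q (x + Pi.single k 1) t
    rw [if_neg hxB, zero_add] at key
    have hne : (s + ∑ j, lam x j) ≠ 0 := ne_of_gt hpos
    have hsum : ∑ k, (lam x k / (s + ∑ j, lam x j)) *
          (∫ t in Set.Ioi (0 : ℝ), Real.exp (-s * t) * Q (x + Pi.single k 1) t) =
        (∑ k, lam x k *
          ∫ t in Set.Ioi (0 : ℝ), Real.exp (-s * t) * Q (x + Pi.single k 1) t) /
          (s + ∑ j, lam x j) := by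
      rw [Finset.sum_div]
      exact Finset.sum_congr rfl fun k _ => div_mul_eq_mul_div _ _ _
    rw [hsum, ← key, mul_div_cancel_left₀ _ hne]
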